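/- Let Z_1, ..., Z_n be independent random variables taking values in a set M of m elements, and let T = |{j ∈ M : |{i : Z_i = j}| > 1}|. Then Var(T) ≤ n/4. -/

import Mathlib

open MeasureTheory ProbabilityTheory

/-- The number of elements of `Fin m` taken as value by more than one of the coordinates
of `z`. -/
def repeatCount {n m : ℕ} (z : Fin n → Fin m) : ℕ :=
  (Finset.univ.filter (fun j : Fin m =>
    1 < (Finset.univ.filter (fun i : Fin n => z i = j)).card)).card

section Aux
open Finset


/-- Variance of a function with range in an interval of length 1 is at most 1/4. -/
lemma varA {m : ℕ} (p g : Fin m → ℝ)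
    (hp0 : ∀ a, 0 ≤ p a) (hp1 : ∑ a, p a = 1)
    (hg : ∀ a b, g a - g b ≤ 1) :
    (∑ a, p a * g a ^ 2) - (∑ a, p a * g a) ^ 2 ≤ 1 / 4 := by
  have hm : (univ : Finset (Fin m)).Nonempty := by
    rcases (univ : Finset (Fin m)).eq_empty_or_nonempty with h | h
    · rw [h] at hp1; simp at hp1
    · exact h
  obtain ⟨a0, -, ha0⟩ := Finset.exists_min_image univ g hm
  set c := g a0 + 1/2 with hc
  have hbound : ∀ a, (g a - c) ^ 2 ≤ (1/2 : ℝ) ^ 2 := by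
    intro a
    have h1 : g a - g a0 ≤ 1 := hg a a0
    have h2 : g a0 ≤ g a := ha0 a (mem_univ a)
    apply sq_le_sq' <;> rw [hc] <;> linarith
  have key : ∑ a, p a * (g a - c) ^ 2 ≤ 1/4 := by
    calc ∑ a, p a * (g a - c) ^ 2 ≤ ∑ a, p a * (1/4) := by
          refine Finset.sum_le_sum fun a _ => ?_
          have := hbound a
          nlinarith [hp0 a]
      _ = 1/4 := by rw [← Finset.sum_mul, hp1, one_mul]
  have expand : ∑ a, p a * (g a - c) ^ 2
      = (∑ a, p a * g a ^ 2) - 2 * c * (∑ a, p a * g a) + c ^ 2 * (∑ a, p a) := by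
    rw [Finset.sum_congr rfl (fun a _ => show p a * (g a - c) ^ 2
        = p a * g a ^ 2 - 2 * c * (p a * g a) + c ^ 2 * p a by ring),
      Finset.sum_add_distrib, Finset.sum_sub_distrib, ← Finset.mul_sum, ← Finset.mul_sum]
  rw [hp1] at expand
  nlinarith [sq_nonneg ((∑ a, p a * g a) - c)]

/-- Efron–Stein / bounded differences for finite product weights. -/
lemma core (m : ℕ) : ∀ (n : ℕ) (p : Fin n → Fin m → ℝ),
    (∀ i j, 0 ≤ p i j) → (∀ i, ∑ j, p i j = 1) →
    ∀ f : (Fin n → Fin m) → ℝ,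
    (∀ (i : Fin n) (x y : Fin n → Fin m), (∀ j, j ≠ i → x j = y j) → f x - f y ≤ 1) →
    (∑ x, (∏ i, p i (x i)) * f x ^ 2) - (∑ x, (∏ i, p i (x i)) * f x) ^ 2 ≤ n / 4 := by
  intro n
  induction n with
  | zero =>
    intro p hp0 hp1 f hf
    simp
  | succ n ih =>
    intro p hp0 hp1 f hf
    set q : Fin n → Fin m → ℝ := fun i j => p i.succ j with hq
    set W : (Fin n → Fin m) → ℝ := fun y => ∏ i, q i (y i) with hW
    have hW0 : ∀ y, 0 ≤ W y := fun y => Finset.prod_nonneg fun i _ => hp0 _ _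
    have hWsum : ∑ y : Fin n → Fin m, W y = 1 := by
      have h := Finset.prod_univ_sum (fun _ : Fin n => (univ : Finset (Fin m))) q
      rw [Fintype.piFinset_univ] at h
      rw [show (∑ y : Fin n → Fin m, W y) = ∑ y : Fin n → Fin m, ∏ i, q i (y i) from rfl, ← h]
      exact Finset.prod_eq_one fun i _ => hp1 i.succ
    have split : ∀ h : (Fin (n+1) → Fin m) → ℝ,
        ∑ x, (∏ i, p i (x i)) * h x = ∑ a, p 0 a * ∑ y, W y * h (Fin.cons a y) := by
      intro h
      rw [← (Fin.consEquiv (fun _ : Fin (n+1) => Fin m)).sum_comp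
        (fun x => (∏ i, p i (x i)) * h x), Fintype.sum_prod_type]
      refine Finset.sum_congr rfl fun a _ => ?_
      rw [Finset.mul_sum]
      refine Finset.sum_congr rfl fun y _ => ?_
      have he : (Fin.consEquiv fun _ : Fin (n+1) => Fin m) (a, y) = Fin.cons a y := rfl
      rw [he, Fin.prod_univ_succ]
      simp only [Fin.cons_zero, Fin.cons_succ, hW, hq, mul_assoc]
    set g : Fin m → ℝ := fun a => ∑ y, W y * f (Fin.cons a y) with hgdef
    set v : Fin m → ℝ := fun a => ∑ y, W y * f (Fin.cons a y) ^ 2 with hvdef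
    have hIH : ∀ a, v a - g a ^ 2 ≤ n / 4 := by
      intro a
      have hfc : ∀ (i : Fin n) (x y : Fin n → Fin m), (∀ j, j ≠ i → x j = y j) →
          f (Fin.cons a x) - f (Fin.cons a y) ≤ 1 := by
        intro i x y hxy
        refine hf i.succ _ _ fun j => ?_
        refine Fin.cases (fun _ => by simp) (fun k hj => ?_) j
        simp only [Fin.cons_succ]
        exact hxy k fun hk => hj (by rw [hk])
      have := ih q (fun i j => hp0 _ _) (fun i => hp1 i.succ) (fun y => f (Fin.cons a y)) hfc
      exact this
    have hd : ∀ a b (y : Fin n → Fin m), f (Fin.cons a y) - f (Fin.cons b y) ≤ 1 := by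
      intro a b y
      refine hf 0 _ _ fun j hj => ?_
      obtain ⟨k, rfl⟩ := Fin.exists_succ_eq.mpr hj
      simp [Fin.cons_succ]
    have hgb : ∀ a b, g a - g b ≤ 1 := by
      intro a b
      have h1 : g a - g b = ∑ y, W y * (f (Fin.cons a y) - f (Fin.cons b y)) := by
        rw [hgdef]
        simp only [mul_sub, Finset.sum_sub_distrib]
      rw [h1]
      calc ∑ y, W y * (f (Fin.cons a y) - f (Fin.cons b y)) ≤ ∑ y, W y * 1 :=
            Finset.sum_le_sum fun y _ => mul_le_mul_of_nonneg_left (hd a b y) (hW0 y)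
        _ = 1 := by simp [hWsum]
    rw [split (fun x => f x ^ 2), split f]
    have hA : ∑ a, p 0 a * (v a - g a ^ 2) ≤ (n : ℝ) / 4 := by
      calc ∑ a, p 0 a * (v a - g a ^ 2) ≤ ∑ a, p 0 a * ((n : ℝ) / 4) :=
            Finset.sum_le_sum fun a _ => mul_le_mul_of_nonneg_left (hIH a) (hp0 0 a)
        _ = (n : ℝ) / 4 := by rw [← Finset.sum_mul, hp1 0, one_mul]
    have hB : (∑ a, p 0 a * g a ^ 2) - (∑ a, p 0 a * g a) ^ 2 ≤ 1 / 4 :=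
      varA (p 0) g (hp0 0) (hp1 0) hgb
    have hsplit2 : ∑ a, p 0 a * v a
        = ∑ a, p 0 a * (v a - g a ^ 2) + ∑ a, p 0 a * g a ^ 2 := by
      rw [← Finset.sum_add_distrib]
      exact Finset.sum_congr rfl fun a _ => by ring
    have hcast : ((n : ℝ) + 1) / 4 = (n : ℝ) / 4 + 1 / 4 := by ring
    push_cast
    rw [hcast]
    linarith [hA, hB, hsplit2]


lemma repeatCount_le {n m : ℕ} (z : Fin n → Fin m) : repeatCount z ≤ m := by
  calc repeatCount z ≤ (univ : Finset (Fin m)).card := Finset.card_filter_le _ _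
    _ = m := by simp

lemma repeatCount_diff {n m : ℕ} (i : Fin n) (x y : Fin n → Fin m)
    (hxy : ∀ j, j ≠ i → x j = y j) :
    (repeatCount x : ℝ) - repeatCount y ≤ 1 := by
  have hsub : (univ.filter fun j : Fin m => 1 < (univ.filter fun k : Fin n => x k = j).card)
      ⊆ insert (x i) (univ.filter fun j : Fin m =>
        1 < (univ.filter fun k : Fin n => y k = j).card) := by
    intro j hj
    simp only [mem_filter, mem_univ, true_and] at hj
    rcases eq_or_ne j (x i) with h | h
    · exact h ▸ Finset.mem_insert_self _ _
    · refine Finset.mem_insert_of_mem ?_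
      simp only [mem_filter, mem_univ, true_and]
      refine lt_of_lt_of_le hj (Finset.card_le_card ?_)
      intro k hk
      simp only [mem_filter, mem_univ, true_and] at hk ⊢
      rcases eq_or_ne k i with rfl | hki
      · exact absurd hk.symm h
      · rw [← hxy k hki]; exact hk
    
  have h2 : repeatCount x ≤ repeatCount y + 1 := by
    have := (Finset.card_le_card hsub).trans (Finset.card_insert_le _ _)
    simpa [repeatCount] using this
  have : (repeatCount x : ℝ) ≤ (repeatCount y : ℝ) + 1 := by exact_mod_cast h2
  linarith


end Aux

open Finset in
/-- If `Z 1, ..., Z n` are independent random variables with values in a set of `m`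
elements, then the variance of the number of elements taken as value by more than one of
them is at most `n/4`. -/
theorem variance_repeatCount_le (n m : ℕ)
    {Ω : Type*} [MeasurableSpace Ω] (P : Measure Ω) [IsProbabilityMeasure P]
    (Z : Fin n → Ω → Fin m) (hmeas : ∀ i, Measurable (Z i))
    (hindep : iIndepFun Z P) :
    variance (fun ω => (repeatCount (fun i => Z i ω) : ℝ)) P ≤ (n : ℝ) / 4 := by
  classical
  set g : (Fin n → Fin m) → ℝ := fun x => (repeatCount x : ℝ) with hg
  set V : Ω → (Fin n → Fin m) := fun ω i => Z i ω with hV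
  have hVmeas : Measurable V := measurable_pi_lambda _ fun i => hmeas i
  set p : Fin n → Fin m → ℝ := fun i j => (P (Z i ⁻¹' {j})).toReal with hp
  have hp0 : ∀ i j, 0 ≤ p i j := fun i j => ENNReal.toReal_nonneg
  have hp1 : ∀ i, ∑ j, p i j = 1 := by
    intro i
    rw [hp]
    rw [← ENNReal.toReal_sum (fun j _ => measure_ne_top P _)]
    rw [sum_measure_preimage_singleton _ (fun j _ => (hmeas i) (measurableSet_singleton j))]
    simp
  set μ : Measure (Fin n → Fin m) := P.map V with hμ
  have hμprob : IsProbabilityMeasure μ := Measure.isProbabilityMeasure_map hVmeas.aemeasurable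
  have hμx : ∀ x : Fin n → Fin m, (μ {x}).toReal = ∏ i, p i (x i) := by
    intro x
    rw [hμ, Measure.map_apply hVmeas (measurableSet_singleton x)]
    have hpre : V ⁻¹' {x} = ⋂ i, Z i ⁻¹' {x i} := by
      ext ω
      simp [hV, funext_iff]
    rw [hpre, hindep.meas_iInter (fun i => ⟨{x i}, measurableSet_singleton _, rfl⟩),
      ENNReal.toReal_prod]
  have key : ∀ h : (Fin n → Fin m) → ℝ,
      ∫ ω, h (V ω) ∂P = ∑ x, (∏ i, p i (x i)) * h x := by
    intro h
    rw [← integral_map hVmeas.aemeasurable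
      (measurable_of_countable h).stronglyMeasurable.aestronglyMeasurable]
    rw [integral_fintype (Integrable.of_finite)]
    refine Finset.sum_congr rfl fun x _ => ?_
    rw [measureReal_def, hμx x, smul_eq_mul]
  have hX : MemLp (fun ω => g (V ω)) 2 P := by
    refine MemLp.of_bound (((measurable_of_countable g).comp hVmeas).aestronglyMeasurable)
      (m : ℝ) (Filter.Eventually.of_forall fun ω => ?_)
    rw [hg]
    simp only [Real.norm_natCast]
    exact_mod_cast repeatCount_le (V ω)
  have hvar := variance_eq_sub hX
  have e1 : (fun ω => g (V ω)) ^ 2 = fun ω => (fun x => g x ^ 2) (V ω) := by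
    funext ω; simp [pow_two]
  have e2 : ∫ ω, ((fun ω => g (V ω)) ^ 2) ω ∂P = ∑ x, (∏ i, p i (x i)) * g x ^ 2 := by
    rw [e1]; exact key _
  have e3 : ∫ ω, g (V ω) ∂P = ∑ x, (∏ i, p i (x i)) * g x := key g
  have hdiff : ∀ (i : Fin n) (x y : Fin n → Fin m), (∀ j, j ≠ i → x j = y j) →
      g x - g y ≤ 1 := fun i x y hxy => repeatCount_diff i x y hxy
  calc variance (fun ω => g (V ω)) P
      = (∑ x, (∏ i, p i (x i)) * g x ^ 2) - (∑ x, (∏ i, p i (x i)) * g x) ^ 2 := by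
        rw [hvar, ← e2, ← e3]
    _ ≤ (n : ℝ) / 4 := core m n p hp0 hp1 g hdiff
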